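/- Let {M_n} be a sequence of atomic Puiseux monoids with A(M_n) ⊆ A(M_{n+1}) for all n, where A denotes the set of atoms. Then M = ⋃_n M_n is an atomic Puiseux monoid and A(M) = ⋃_n A(M_n). -/
import Mathlib


open scoped BigOperators

/-- A Puiseux monoid: an additive submonoid of ℚ consisting of nonnegative elements. -/
def IsPuiseux (M : AddSubmonoid ℚ) : Prop := ∀ x ∈ M, (0:ℚ) ≤ x

/-- `a` is an atom of the submonoid `S`. -/
def IsAtomOf {α : Type*} [AddCommMonoid α] (S : AddSubmonoid α) (a : α) : Prop :=
  a ∈ S ∧ a ≠ 0 ∧ ∀ u v : α, u ∈ S → v ∈ S → a = u + v → u = 0 ∨ v = 0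

/-- `x` has a factorization of length `n` into atoms of `S`. -/
def IsLengthOf {α : Type*} [AddCommMonoid α] (S : AddSubmonoid α) (x : α) (n : ℕ) : Prop :=
  ∃ f : Fin n → α, (∀ i, IsAtomOf S (f i)) ∧ x = ∑ i, f i

/-- The set of lengths of `x` in `S`. -/
def lengthsOf {α : Type*} [AddCommMonoid α] (S : AddSubmonoid α) (x : α) : Set ℕ :=
  {n | IsLengthOf S x n}

/-- `S` is atomic: every nonzero element is a finite sum of atoms. -/
def AtomicM {α : Type*} [AddCommMonoid α] (S : AddSubmonoid α) : Prop :=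
  ∀ x ∈ S, x ≠ 0 → ∃ n : ℕ, IsLengthOf S x n

/-- The system of sets of lengths of `M`. -/
def systemOfLengths (M : AddSubmonoid ℚ) : Set (Set ℕ) :=
  {S | ∃ x ∈ M, lengthsOf M x = S}

/-- The elementary Puiseux monoid ⟨1/p : p prime⟩. -/
def elemPM : AddSubmonoid ℚ :=
  AddSubmonoid.closure {q : ℚ | ∃ p : ℕ, p.Prime ∧ q = 1 / p}

/-- The union of an ascending (with respect to atoms) sequence of atomic Puiseux
monoids is an atomic Puiseux monoid whose atoms are the union of the atoms. -/
theorem stmt6 (M : ℕ → AddSubmonoid ℚ) (hP : ∀ n, IsPuiseux (M n))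
    (hAt : ∀ n, AtomicM (M n))
    (hmono : ∀ n, ∀ a : ℚ, IsAtomOf (M n) a → IsAtomOf (M (n+1)) a) :
    ∃ U : AddSubmonoid ℚ,
      (U : Set ℚ) = ⋃ n, (M n : Set ℚ) ∧
      IsPuiseux U ∧ AtomicM U ∧
      ∀ a : ℚ, IsAtomOf U a ↔ ∃ n, IsAtomOf (M n) a := by
  have hmono' : ∀ n m, n ≤ m → ∀ a : ℚ, IsAtomOf (M n) a → IsAtomOf (M m) a := by
    intro n m h
    induction h with
    | refl => exact fun a ha => ha
    | step _ ih => exact fun a ha => hmono _ a (ih a ha)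
  have hsub : ∀ n m, n ≤ m → M n ≤ M m := by
    intro n m h x hx
    by_cases hx0 : x = 0
    · simpa [hx0] using (M m).zero_mem
    · obtain ⟨k, f, hf, hsum⟩ := hAt n x hx hx0
      exact hsum ▸ AddSubmonoid.sum_mem _ (fun i _ => (hmono' n m h _ (hf i)).1)
  have hdir : Directed (· ≤ ·) M := fun i j =>
    ⟨max i j, hsub i _ (le_max_left i j), hsub j _ (le_max_right i j)⟩
  refine ⟨⨆ n, M n, AddSubmonoid.coe_iSup_of_directed hdir, ?_, ?_, ?_⟩
  · intro x hx
    obtain ⟨n, hn⟩ := (AddSubmonoid.mem_iSup_of_directed hdir).1 hx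
    exact hP n x hn
  · intro x hx hx0
    obtain ⟨n, hn⟩ := (AddSubmonoid.mem_iSup_of_directed hdir).1 hx
    obtain ⟨k, f, hf, hsum⟩ := hAt n x hn hx0
    refine ⟨k, f, fun i => ?_, hsum⟩
    obtain ⟨hmem, hne, hat⟩ := hf i
    refine ⟨le_iSup M n hmem, hne, fun u v hu hv huv => ?_⟩
    obtain ⟨j, hj⟩ := (AddSubmonoid.mem_iSup_of_directed hdir).1 hu
    obtain ⟨l, hl⟩ := (AddSubmonoid.mem_iSup_of_directed hdir).1 hv
    obtain ⟨_, _, hat'⟩ := hmono' n (max n (max j l)) (le_max_left _ _) _ ⟨hmem, hne, hat⟩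
    exact hat' u v (hsub j _ (le_trans (le_max_left j l) (le_max_right n _)) hj)
      (hsub l _ (le_trans (le_max_right j l) (le_max_right n _)) hl) huv
  · intro a
    constructor
    · rintro ⟨hmem, hne, hat⟩
      obtain ⟨n, hn⟩ := (AddSubmonoid.mem_iSup_of_directed hdir).1 hmem
      exact ⟨n, hn, hne, fun u v hu hv huv =>
        hat u v (le_iSup M n hu) (le_iSup M n hv) huv⟩
    · rintro ⟨n, hmem, hne, hat⟩
      refine ⟨le_iSup M n hmem, hne, fun u v hu hv huv => ?_⟩
      obtain ⟨j, hj⟩ := (AddSubmonoid.mem_iSup_of_directed hdir).1 hu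
      obtain ⟨l, hl⟩ := (AddSubmonoid.mem_iSup_of_directed hdir).1 hv
      obtain ⟨_, _, hat'⟩ := hmono' n (max n (max j l)) (le_max_left _ _) _ ⟨hmem, hne, hat⟩
      exact hat' u v (hsub j _ (le_trans (le_max_left j l) (le_max_right n _)) hj)
        (hsub l _ (le_trans (le_max_right j l) (le_max_right n _)) hl) huv
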